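/- Let z_1, …, z_{p+1} be points in a real Hilbert space H with pairwise distances at least δ > 0. Then the Chebyshev radius of the set {z_1, …, z_{p+1}} with respect to H is at least δ·√(p/(2(p+1))). -/

import Mathlib

noncomputable def chebRadius {H : Type*} [NormedAddCommGroup H] (A : Set H) : ℝ :=
  ⨅ y : H, ⨆ x : A, ‖(x : H) - y‖

theorem stmt10 {H : Type*} [NormedAddCommGroup H] [InnerProductSpace ℝ H] [CompleteSpace H] (p : ℕ) (hp : 0 < p)
    (z : Fin (p + 1) → H) (δ : ℝ) (hδ : 0 < δ)
    (hz : ∀ i j, i ≠ j → δ ≤ ‖z i - z j‖) :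
    δ * Real.sqrt (p / (2 * (p + 1))) ≤ chebRadius (Set.range z) := by
  have hfin : (Set.range z).Finite := Set.finite_range z
  haveI := hfin.to_subtype
  apply le_ciInf
  intro y
  set a : Fin (p + 1) → H := fun i => z i - y with ha
  set S : ℝ := ∑ i, ‖a i‖ ^ 2 with hS
  have hsum : ∑ i, ∑ j, ‖a i - a j‖ ^ 2 ≤ 2 * (p + 1) * S := by
    have expand : ∀ i j, ‖a i - a j‖ ^ 2
        = ‖a i‖ ^ 2 + ‖a j‖ ^ 2 - 2 * (inner ℝ (a i) (a j) : ℝ) := by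
      intro i j
      rw [@norm_sub_sq_real]
      ring
    have heq : ∑ i, ∑ j, ‖a i - a j‖ ^ 2
        = 2 * (p + 1) * S - 2 * ‖∑ i, a i‖ ^ 2 := by
      simp_rw [expand, Finset.sum_sub_distrib, Finset.sum_add_distrib,
        Finset.sum_const, ← Finset.mul_sum, ← inner_sum, ← sum_inner,
        real_inner_self_eq_norm_sq]
      simp only [Finset.sum_add_distrib, ← Finset.mul_sum, ← hS, Finset.card_univ,
        Fintype.card_fin, nsmul_eq_mul]
      push_cast
      ring
    rw [heq]
    nlinarith [sq_nonneg ‖∑ i, a i‖]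
  have hlow : ((p : ℝ) + 1) * ((p : ℝ) * δ ^ 2) ≤ ∑ i, ∑ j, ‖a i - a j‖ ^ 2 := by
    have step : ∀ i : Fin (p + 1), (p : ℝ) * δ ^ 2 ≤ ∑ j, ‖a i - a j‖ ^ 2 := by
      intro i
      have h1 : (p : ℝ) * δ ^ 2 = ∑ j ∈ Finset.univ.erase i, δ ^ 2 := by
        rw [Finset.sum_const, Finset.card_erase_of_mem (Finset.mem_univ i)]
        simp [mul_comm]
      rw [h1]
      have h2 : ∑ j ∈ Finset.univ.erase i, δ ^ 2 ≤ ∑ j ∈ Finset.univ.erase i, ‖a i - a j‖ ^ 2 := by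
        apply Finset.sum_le_sum
        intro j hj
        have hij : i ≠ j := (Finset.ne_of_mem_erase hj).symm
        have : δ ≤ ‖z i - z j‖ := hz i j hij
        have haij : a i - a j = z i - z j := by simp [ha]
        rw [haij]
        nlinarith [norm_nonneg (z i - z j)]
      refine h2.trans ?_
      exact Finset.sum_le_sum_of_subset_of_nonneg (Finset.erase_subset _ _)
        (fun j _ _ => by positivity)
    calc ((p : ℝ) + 1) * ((p : ℝ) * δ ^ 2)
        = ∑ _i : Fin (p + 1), (p : ℝ) * δ ^ 2 := by simp
      _ ≤ ∑ i, ∑ j, ‖a i - a j‖ ^ 2 := Finset.sum_le_sum fun i _ => step i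
  have hp1 : (0 : ℝ) < (p : ℝ) + 1 := by positivity
  have hSge : ((p : ℝ) + 1) * (δ ^ 2 * ((p : ℝ) / (2 * ((p : ℝ) + 1)))) ≤ S := by
    have h := hlow.trans hsum
    have heq2 : ((p : ℝ) + 1) * (δ ^ 2 * ((p : ℝ) / (2 * ((p : ℝ) + 1)))) = δ ^ 2 * (p : ℝ) * 2⁻¹ := by
      field_simp
    have h2 : ((p : ℝ) + 1) * ((p : ℝ) * δ ^ 2) ≤ ((p : ℝ) + 1) * (2 * S) := by linarith
    have h3 : (p : ℝ) * δ ^ 2 ≤ 2 * S := le_of_mul_le_mul_left h2 hp1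
    rw [heq2]
    linarith
  obtain ⟨i, -, hi⟩ : ∃ i ∈ Finset.univ, δ ^ 2 * ((p : ℝ) / (2 * ((p : ℝ) + 1))) ≤ ‖a i‖ ^ 2 := by
    apply Finset.exists_le_of_sum_le (Finset.univ_nonempty)
    rw [Finset.sum_const]
    simpa [mul_comm] using hSge
  have hkey : δ * Real.sqrt ((p : ℝ) / (2 * ((p : ℝ) + 1))) ≤ ‖a i‖ := by
    have h1 : δ * Real.sqrt ((p : ℝ) / (2 * ((p : ℝ) + 1)))
        = Real.sqrt (δ ^ 2 * ((p : ℝ) / (2 * ((p : ℝ) + 1)))) := by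
      rw [Real.sqrt_mul (sq_nonneg δ), Real.sqrt_sq hδ.le]
    rw [h1, ← Real.sqrt_sq (norm_nonneg (a i))]
    exact Real.sqrt_le_sqrt hi
  have hbdd : BddAbove (Set.range fun x : (Set.range z) => ‖(x : H) - y‖) :=
    Set.Finite.bddAbove (Set.finite_range _)
  have : ‖a i‖ ≤ ⨆ x : (Set.range z), ‖(x : H) - y‖ :=
    le_ciSup hbdd ⟨z i, Set.mem_range_self i⟩
  calc δ * Real.sqrt ((p : ℝ) / (2 * ((p : ℝ) + 1))) ≤ ‖a i‖ := hkey
    _ ≤ _ := this
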